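/- Let Ω be a set, m a positive integer, and τ : Ω → ℝ^m an arbitrary map. Then for every vector v ∈ ℝ^m, the real-valued function on Ω given by ξ ↦ ⟨v, τ(ξ)⟩ belongs to the linear span, inside the vector space of all functions Ω → ℝ, of the family of functions {ξ ↦ ⟨τ(a), τ(ξ)⟩ : a ∈ Ω}. -/

import Mathlib

theorem stmt19 {Ω : Type*} (m : ℕ) (hm : 0 < m) (τ : Ω → (Fin m → ℝ)) (v : Fin m → ℝ) :
    (fun ξ => ∑ i, v i * τ ξ i) ∈
      Submodule.span ℝ (Set.range fun a : Ω => fun ξ : Ω => ∑ i, τ a i * τ ξ i) := by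
  classical
  let E := EuclideanSpace ℝ (Fin m)
  let τ' : Ω → E := fun a => WithLp.toLp 2 (τ a)
  let v' : E := WithLp.toLp 2 v
  let K : Submodule ℝ E := Submodule.span ℝ (Set.range τ')
  have : CompleteSpace K := FiniteDimensional.complete ℝ K
  let w : E := K.starProjection v'
  have hw : w ∈ K := K.starProjection_apply_mem v'
  have hperp : v' - w ∈ Kᗮ := K.sub_starProjection_mem_orthogonal v'
  have hfun : (fun ξ => ∑ i, v i * τ ξ i) = fun ξ => ∑ i, w i * τ ξ i := by
    funext ξ
    have hmem : τ' ξ ∈ K := Submodule.subset_span ⟨ξ, rfl⟩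
    have h0 : (inner ℝ (τ' ξ) (v' - w) : ℝ) = 0 := hperp (τ' ξ) hmem
    simp only [E, PiLp.inner_apply, RCLike.inner_apply, conj_trivial, PiLp.sub_apply] at h0
    have h1 : ∑ i, τ ξ i * (v i - w i) = 0 := by simpa only [mul_comm] using h0
    have h2 : ∑ i, τ ξ i * v i - ∑ i, τ ξ i * w i = 0 := by
      rw [← Finset.sum_sub_distrib]
      simpa [mul_sub] using h1
    calc ∑ i, v i * τ ξ i = ∑ i, τ ξ i * v i := by simp [mul_comm]
    _ = ∑ i, τ ξ i * w i := by linarith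
    _ = ∑ i, w i * τ ξ i := by simp [mul_comm]
  let L : E →ₗ[ℝ] (Ω → ℝ) :=
    { toFun := fun u => fun ξ => ∑ i, u i * τ ξ i
      map_add' := by
        intro x y; funext ξ
        show (∑ i, (x+y) i * τ ξ i) = (∑ i, x i * τ ξ i) + ∑ i, y i * τ ξ i
        rw [← Finset.sum_add_distrib]
        refine Finset.sum_congr rfl fun i _ => ?_
        show (x i + y i) * τ ξ i = x i * τ ξ i + y i * τ ξ i
        ring
      map_smul' := by
        intro c x; funext ξ
        show (∑ i, (c • x) i * τ ξ i) = c * ∑ i, x i * τ ξ i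
        rw [Finset.mul_sum]
        refine Finset.sum_congr rfl fun i _ => ?_
        show (c * x i) * τ ξ i = c * (x i * τ ξ i)
        ring }
  have hmemmap : L w ∈ Submodule.map L K := ⟨w, hw, rfl⟩
  have hle : Submodule.map L K ≤
      Submodule.span ℝ (Set.range fun a : Ω => fun ξ : Ω => ∑ i, τ a i * τ ξ i) := by
    rw [Submodule.map_span]
    apply Submodule.span_mono
    rintro _ ⟨_, ⟨a, rfl⟩, rfl⟩
    exact ⟨a, rfl⟩
  rw [hfun]
  exact hle hmemmap
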